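/- arXiv:1808.05159 — 4 statements merged into one kernel-verified Lean document; each statement's English description precedes it below -/
import Mathlib

section
/- For every real number λ ≥ 0 and every s with 0 < s < 1, λ^s = (1/Γ(-s)) ∫₀^∞ (e^{-tλ} - 1) t^{-1-s} dt, where Γ(-s) = Γ(1-s)/(-s). -/
open MeasureTheory Real

lemma abs_exp_neg_sub_one_le {u : ℝ} (hu : 0 ≤ u) : |Real.exp (-u) - 1| ≤ u := by
  have h1 : Real.exp (-u) ≤ 1 := Real.exp_le_one_iff.mpr (by linarith)
  have h2 : 1 - u ≤ Real.exp (-u) := by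
    have := Real.add_one_le_exp (-u); linarith
  rw [abs_le]; constructor <;> linarith

lemma integrable_key {s : ℝ} (hs : 0 < s) (hs1 : s < 1) :
    IntegrableOn (fun u => (Real.exp (-u) - 1) * u ^ (-1 - s)) (Set.Ioi (0:ℝ)) := by
  have hcont : ContinuousOn (fun u : ℝ => (Real.exp (-u) - 1) * u ^ (-1 - s)) (Set.Ioi 0) := by
    apply ContinuousOn.mul
    · exact (Continuous.sub (Real.continuous_exp.comp continuous_neg) continuous_const).continuousOn
    · exact fun x hx => (Real.continuousAt_rpow_const x _ (Or.inl (ne_of_gt hx))).continuousWithinAt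
  have h01 : IntegrableOn (fun u => (Real.exp (-u) - 1) * u ^ (-1 - s)) (Set.Ioc (0:ℝ) 1) := by
    have hint : IntegrableOn (fun u : ℝ => u ^ (-s)) (Set.Ioc (0:ℝ) 1) :=
      (intervalIntegral.intervalIntegrable_rpow' (a := 0) (b := 1)
        (r := -s) (by linarith)).1
    apply Integrable.mono hint
    · exact (hcont.mono (Set.Ioc_subset_Ioi_self)).aestronglyMeasurable measurableSet_Ioc
    · filter_upwards [ae_restrict_mem measurableSet_Ioc] with u hu
      have hu0 : 0 < u := hu.1
      rw [Real.norm_eq_abs, Real.norm_eq_abs, abs_mul,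
        abs_of_nonneg (Real.rpow_nonneg hu0.le (-1-s)), abs_of_nonneg (Real.rpow_nonneg hu0.le (-s))]
      calc |Real.exp (-u) - 1| * u ^ (-1 - s) ≤ u * u ^ (-1 - s) := by
            apply mul_le_mul_of_nonneg_right (abs_exp_neg_sub_one_le hu0.le)
              (Real.rpow_nonneg hu0.le _)
        _ = u ^ (-s) := by
            rw [← Real.rpow_one_add' hu0.le (by linarith : (1 : ℝ) + (-1 - s) ≠ 0)]
            congr 1 <;> ring
  have h1i : IntegrableOn (fun u => (Real.exp (-u) - 1) * u ^ (-1 - s)) (Set.Ioi (1:ℝ)) := by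
    have hint : IntegrableOn (fun u : ℝ => u ^ (-1 - s)) (Set.Ioi (1:ℝ)) :=
      integrableOn_Ioi_rpow_of_lt (by linarith) one_pos
    apply Integrable.mono hint
    · exact (hcont.mono (t := Set.Ioi (1:ℝ)) (fun x hx => Set.mem_Ioi.mpr (lt_trans one_pos (Set.mem_Ioi.mp hx)))).aestronglyMeasurable measurableSet_Ioi
    · filter_upwards [ae_restrict_mem measurableSet_Ioi] with u hu
      have hu0 : (0:ℝ) < u := lt_trans one_pos hu
      rw [Real.norm_eq_abs, Real.norm_eq_abs, abs_mul,
        abs_of_nonneg (Real.rpow_nonneg hu0.le (-1-s))]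
      have : |Real.exp (-u) - 1| ≤ 1 := by
        have h1 : Real.exp (-u) ≤ 1 := Real.exp_le_one_iff.mpr (by linarith)
        have h2 : 0 < Real.exp (-u) := Real.exp_pos _
        rw [abs_le]; constructor <;> linarith
      nlinarith [Real.rpow_nonneg hu0.le (-1 - s)]
  have : IntegrableOn (fun u => (Real.exp (-u) - 1) * u ^ (-1 - s))
      (Set.Ioc (0:ℝ) 1 ∪ Set.Ioi 1) := h01.union h1i
  apply this.mono_set
  intro x hx
  rcases le_or_gt x 1 with h | h
  · exact Or.inl ⟨hx, h⟩
  · exact Or.inr h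

lemma key_integral {s : ℝ} (hs : 0 < s) (hs1 : s < 1) :
    ∫ u in Set.Ioi (0:ℝ), (Real.exp (-u) - 1) * u ^ (-1 - s) = Real.Gamma (-s) := by
  have hs0 : s ≠ 0 := hs.ne'
  set F : ℝ → ℝ := fun u => (Real.exp (-u) - 1) * u ^ (-s) * (-1 / s) with hF
  set f' : ℝ → ℝ := fun u =>
    (1 / s) * (Real.exp (-u) * u ^ (-s)) + (Real.exp (-u) - 1) * u ^ (-1 - s) with hf'
  have hGamma : IntegrableOn (fun u : ℝ => Real.exp (-u) * u ^ (-s)) (Set.Ioi (0:ℝ)) := by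
    have := Real.GammaIntegral_convergent (s := 1 - s) (by linarith)
    simpa using this
  have hkey := integrable_key hs hs1
  have hf'int : IntegrableOn f' (Set.Ioi (0:ℝ)) := (hGamma.const_mul _).add hkey
  have hderiv : ∀ x ∈ Set.Ioi (0:ℝ), HasDerivAt F (f' x) x := by
    intro x hx
    have hx0 : (0:ℝ) < x := hx
    have h1 : HasDerivAt (fun u : ℝ => Real.exp (-u) - 1) (-Real.exp (-x)) x := by
      have := ((Real.hasDerivAt_exp (-x)).comp x (hasDerivAt_neg x)).sub_const 1
      simpa using this
    have h2 : HasDerivAt (fun u : ℝ => u ^ (-s)) (-s * x ^ (-s - 1)) x :=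
      Real.hasDerivAt_rpow_const (Or.inl hx0.ne')
    have hd := (h1.mul h2).mul_const (-1 / s)
    have hxe : x ^ (-s - 1) = x ^ (-1 - s) := by congr 1 <;> ring
    refine hd.congr_deriv ?_
    rw [hf']
    simp only [hxe]
    field_simp
    ring
  have hF0 : F 0 = 0 := by simp [hF]
  have hcont : ContinuousWithinAt F (Set.Ici (0:ℝ)) 0 := by
    rw [ContinuousWithinAt, hF0]
    have hbound : ∀ u ∈ Set.Ici (0:ℝ), ‖F u‖ ≤ u ^ (1 - s) * (1 / s) := by
      intro u hu
      rcases eq_or_lt_of_le (Set.mem_Ici.mp hu) with h | h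
      · rw [← h, hF0]
        simp [Real.zero_rpow (by linarith : (1:ℝ) - s ≠ 0)]
      · rw [hF, Real.norm_eq_abs, abs_mul, abs_mul,
          abs_of_nonneg (Real.rpow_nonneg h.le _), abs_div, abs_neg, abs_one,
          abs_of_pos hs]
        have hle : |Real.exp (-u) - 1| * u ^ (-s) ≤ u ^ (1 - s) := by
          calc |Real.exp (-u) - 1| * u ^ (-s) ≤ u * u ^ (-s) :=
                mul_le_mul_of_nonneg_right (abs_exp_neg_sub_one_le h.le)
                  (Real.rpow_nonneg h.le _)
            _ = u ^ (1 - s) := by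
                rw [← Real.rpow_one_add' h.le (by linarith : (1:ℝ) + (-s) ≠ 0)]
                congr 1 <;> ring
        exact mul_le_mul_of_nonneg_right hle (by positivity)
    have htend : Filter.Tendsto (fun u : ℝ => u ^ (1 - s) * (1 / s))
        (nhdsWithin 0 (Set.Ici 0)) (nhds 0) := by
      have h0 : Filter.Tendsto (fun u : ℝ => u ^ (1 - s)) (nhds 0) (nhds ((0:ℝ) ^ (1 - s))) :=
        (Real.continuousAt_rpow_const 0 (1 - s) (Or.inr (by linarith))).tendsto
      rw [Real.zero_rpow (by linarith : (1:ℝ) - s ≠ 0)] at h0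
      have h1 := (h0.mul_const (1 / s)).mono_left
        (nhdsWithin_le_nhds (s := Set.Ici (0:ℝ)) (a := (0:ℝ)))
      simpa using h1
    apply squeeze_zero_norm' _ htend
    filter_upwards [self_mem_nhdsWithin] with u hu using hbound u hu
  have htop : Filter.Tendsto F Filter.atTop (nhds 0) := by
    have h1 : Filter.Tendsto (fun u : ℝ => Real.exp (-u) - 1) Filter.atTop (nhds (0 - 1)) :=
      Real.tendsto_exp_neg_atTop_nhds_zero.sub_const 1
    have h2 : Filter.Tendsto (fun u : ℝ => u ^ (-s)) Filter.atTop (nhds 0) :=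
      tendsto_rpow_neg_atTop hs
    have := (h1.mul h2).mul_const (-1 / s)
    simpa using this
  have hFTC := integral_Ioi_of_hasDerivAt_of_tendsto hcont hderiv hf'int htop
  rw [hF0, sub_zero] at hFTC
  have hsplit : ∫ x in Set.Ioi (0:ℝ), f' x =
      (1 / s) * (∫ u in Set.Ioi (0:ℝ), Real.exp (-u) * u ^ (-s)) +
      ∫ u in Set.Ioi (0:ℝ), (Real.exp (-u) - 1) * u ^ (-1 - s) := by
    rw [hf', integral_add (hGamma.const_mul _) hkey, integral_const_mul]
  have hG : (∫ u in Set.Ioi (0:ℝ), Real.exp (-u) * u ^ (-s)) = Real.Gamma (1 - s) := by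
    rw [Real.Gamma_eq_integral (by linarith : (0:ℝ) < 1 - s)]
    norm_num
  have hGm : Real.Gamma (-s) = -(1 / s) * Real.Gamma (1 - s) := by
    have hadd := Real.Gamma_add_one (s := -s) (by linarith)
    rw [show (-s + 1 : ℝ) = 1 - s by ring] at hadd
    rw [hadd]
    field_simp
  rw [hsplit, hG] at hFTC
  rw [hGm]
  linarith [hFTC]

theorem gamma_integral_positive_power (lam s : ℝ) (hlam : 0 ≤ lam) (hs : 0 < s) (hs1 : s < 1) :
    lam ^ s = (1 / Real.Gamma (-s)) *
      ∫ t in Set.Ioi (0:ℝ), (Real.exp (-t * lam) - 1) * t ^ (-1 - s) := by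
  rcases eq_or_lt_of_le hlam with h | hlam'
  · rw [← h]
    simp [Real.zero_rpow hs.ne']
  · have hGne : Real.Gamma (-s) ≠ 0 := by
      have hadd := Real.Gamma_add_one (s := -s) (by linarith)
      rw [show (-s + 1 : ℝ) = 1 - s by ring] at hadd
      have h2 : 0 < Real.Gamma (1 - s) := Real.Gamma_pos_of_pos (by linarith)
      intro hc
      rw [hc, mul_zero] at hadd
      linarith
    have hsub : (∫ t in Set.Ioi (0:ℝ), (Real.exp (-t * lam) - 1) * t ^ (-1 - s)) =
        lam ^ s * Real.Gamma (-s) := by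
      have hcongr : ∀ t ∈ Set.Ioi (0:ℝ), (Real.exp (-t * lam) - 1) * t ^ (-1 - s) =
          lam ^ (1 + s) * ((Real.exp (-(lam * t)) - 1) * (lam * t) ^ (-1 - s)) := by
        intro t ht
        have ht0 : (0:ℝ) < t := ht
        rw [Real.mul_rpow hlam ht0.le]
        have hone : lam ^ (1 + s) * lam ^ (-1 - s) = 1 := by
          rw [← Real.rpow_add hlam']
          norm_num
        rw [show -t * lam = -(lam * t) by ring]
        linear_combination (-(Real.exp (-(lam * t)) - 1) * t ^ (-1 - s)) * hone
      rw [setIntegral_congr_fun measurableSet_Ioi hcongr, integral_const_mul,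
        integral_comp_mul_left_Ioi (fun u => (Real.exp (-u) - 1) * u ^ (-1 - s)) 0 hlam',
        mul_zero, key_integral hs hs1]
      rw [smul_eq_mul, ← mul_assoc]
      congr 1
      rw [← Real.rpow_neg_one lam, ← Real.rpow_add hlam']
      congr 1
      ring
    rw [hsub]
    field_simp
end

section
/- Let u : ℝⁿ → ℝ be nonnegative and Schwartz class, and suppose u(x₀) = 0 at some point x₀ ∈ ℝⁿ. Then (-Δ)^s u(x₀) ≤ 0, where (-Δ)^s u(x₀) = (1/Γ(-s)) ∫₀^∞ (e^{tΔ}u(x₀) - u(x₀)) t^{-1-s} dt with 0 < s < 1. Moreover, (-Δ)^s u(x₀) = 0 if and only if u ≡ 0. -/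
open MeasureTheory Real

private lemma aux_xexp (x : ℝ) (hx : 0 ≤ x) : x * Real.exp (-x) ≤ Real.exp (-(x/2)) := by
  have h4 : x/4 + 1 ≤ Real.exp (x/4) := Real.add_one_le_exp _
  have hsq : Real.exp (x/4) * Real.exp (x/4) = Real.exp (x/2) := by
    rw [← Real.exp_add]; ring_nf
  have hx2 : x ≤ Real.exp (x/2) := by
    nlinarith [Real.exp_nonneg (x/4), sq_nonneg (x/4 - 1)]
  calc x * Real.exp (-x) ≤ Real.exp (x/2) * Real.exp (-x) :=
        mul_le_mul_of_nonneg_right hx2 (Real.exp_nonneg _)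
    _ = Real.exp (-(x/2)) := by rw [← Real.exp_add]; ring_nf

private lemma aux_int_exp (n : ℕ) {b : ℝ} (hb : 0 < b) :
    Integrable (fun v : EuclideanSpace ℝ (Fin n) => Real.exp (-(b * ‖v‖^2))) := by
  have h := (GaussianFourier.integrable_cexp_neg_mul_sq_norm_add
      (V := EuclideanSpace ℝ (Fin n)) (b := (b : ℂ)) (by simpa using hb) 0 0).norm
  refine h.congr (Filter.Eventually.of_forall fun v => ?_)
  have hre : (-(b:ℂ) * (‖v‖:ℂ)^2 + 0 * ((inner ℝ (0 : EuclideanSpace ℝ (Fin n)) v : ℝ) : ℂ)).re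
      = -(b * ‖v‖^2) := by
    rw [show -(b:ℂ) * (‖v‖:ℂ)^2 + 0 * ((inner ℝ (0 : EuclideanSpace ℝ (Fin n)) v : ℝ) : ℂ)
        = ((-(b * ‖v‖^2) : ℝ) : ℂ) by push_cast; ring]
    exact Complex.ofReal_re _
  simp only [Complex.norm_exp, hre]

private lemma aux_int_sq_exp (n : ℕ) {b : ℝ} (hb : 0 < b) :
    Integrable (fun v : EuclideanSpace ℝ (Fin n) => Real.exp (-(b * ‖v‖^2)) * ‖v‖^2) := by
  have hmeas : AEStronglyMeasurable (fun v : EuclideanSpace ℝ (Fin n) =>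
      Real.exp (-(b * ‖v‖^2)) * ‖v‖^2) volume :=
    (((continuous_const.mul (continuous_norm.pow 2)).neg.rexp.mul (continuous_norm.pow 2)).aestronglyMeasurable)
  refine ((aux_int_exp n (b := b/2) (half_pos hb)).const_mul (1/b)).mono' hmeas
    (Filter.Eventually.of_forall fun v => ?_)
  have h := aux_xexp (b * ‖v‖^2) (by positivity)
  rw [Real.norm_eq_abs, abs_of_nonneg (by positivity)]
  have heq : Real.exp (-(b*‖v‖^2)) * ‖v‖^2 = (1/b) * ((b*‖v‖^2) * Real.exp (-(b*‖v‖^2))) := by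
    field_simp
  rw [heq]
  calc (1/b) * ((b*‖v‖^2) * Real.exp (-(b*‖v‖^2)))
      ≤ (1/b) * Real.exp (-(b*‖v‖^2/2)) := by
        exact mul_le_mul_of_nonneg_left h (by positivity)
    _ = 1/b * Real.exp (-(b/2*‖v‖^2)) := by ring_nf

private noncomputable def auxJ (n : ℕ) : ℝ :=
  ∫ y : EuclideanSpace ℝ (Fin n), Real.exp (-(1*‖y‖^2)) * ‖y‖^2

private lemma auxJ_nonneg (n : ℕ) : 0 ≤ auxJ n :=
  integral_nonneg fun y => by positivity

private lemma aux_coef {n : ℕ} {t : ℝ} (ht : 0 < t) :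
    (4 * Real.pi * t) ^ (-(n:ℝ)/2) * (2*Real.sqrt t)^n ≤ 1 := by
  have h4t : (0:ℝ) < 4*t := by linarith
  have h2s : (2*Real.sqrt t) = Real.sqrt (4*t) := by
    rw [show (4:ℝ)*t = 2^2*t by ring, Real.sqrt_mul (by positivity) t,
      Real.sqrt_sq (by norm_num : (0:ℝ) ≤ 2)]
  have h3 : (2*Real.sqrt t)^n = (4*t) ^ ((n:ℝ)/2) := by
    rw [h2s, Real.sqrt_eq_rpow, ← Real.rpow_natCast ((4*t) ^ ((1:ℝ)/2)) n,
      ← Real.rpow_mul h4t.le]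
    congr 1
    ring
  have h4 : (4 * Real.pi * t) ^ (-(n:ℝ)/2) * (4*t) ^ ((n:ℝ)/2)
      = (1/Real.pi) ^ ((n:ℝ)/2) := by
    rw [show -(n:ℝ)/2 = -((n:ℝ)/2) by ring, Real.rpow_neg (by positivity)]
    rw [inv_mul_eq_div, ← Real.div_rpow h4t.le (by positivity)]
    congr 1
    have hπ : Real.pi ≠ 0 := Real.pi_ne_zero
    field_simp
  rw [h3, h4]
  exact Real.rpow_le_one (by positivity)
    (by rw [div_le_one Real.pi_pos]; linarith [Real.pi_gt_three]) (by positivity)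

set_option maxHeartbeats 1000000 in
private lemma aux_K_small (n : ℕ) (u : SchwartzMap (EuclideanSpace ℝ (Fin n)) ℝ)
    (hu : ∀ x, 0 ≤ u x) (x₀ : EuclideanSpace ℝ (Fin n))
    {C : ℝ} (hC : 0 ≤ C) (hCq : ∀ z, u z ≤ C * ‖z - x₀‖^2) :
    ∀ t : ℝ, 0 < t →
      (∫ z : EuclideanSpace ℝ (Fin n),
        (4 * Real.pi * t) ^ (-(n:ℝ)/2) * Real.exp (-‖x₀ - z‖^2 / (4*t)) * u z)
      ≤ (4*C*auxJ n) * t := by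
  intro t ht
  have h4t : (0:ℝ) < 4*t := by linarith
  set c : ℝ := (4 * Real.pi * t) ^ (-(n:ℝ)/2) with hc
  have hc0 : 0 < c := Real.rpow_pos_of_pos (by positivity) _
  have hgint : Integrable (fun w : EuclideanSpace ℝ (Fin n) =>
      Real.exp (-‖w‖^2/(4*t)) * ‖w‖^2) := by
    refine (aux_int_sq_exp n (b := 1/(4*t)) (by positivity)).congr
      (Filter.Eventually.of_forall fun v => ?_)
    show Real.exp (-(1/(4*t) * ‖v‖^2)) * ‖v‖^2 = Real.exp (-‖v‖^2/(4*t)) * ‖v‖^2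
    rw [show -(1/(4*t) * ‖v‖^2) = -‖v‖^2/(4*t) by field_simp]
  have hdom : Integrable (fun z : EuclideanSpace ℝ (Fin n) =>
      (c*C) * (Real.exp (-‖x₀ - z‖^2/(4*t)) * ‖x₀ - z‖^2)) :=
    ((hgint.comp_sub_left x₀).const_mul _)
  have hmono : (∫ z : EuclideanSpace ℝ (Fin n),
        c * Real.exp (-‖x₀ - z‖^2 / (4*t)) * u z)
      ≤ ∫ z : EuclideanSpace ℝ (Fin n),
        (c*C) * (Real.exp (-‖x₀ - z‖^2/(4*t)) * ‖x₀ - z‖^2) := by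
    refine integral_mono_of_nonneg (Filter.Eventually.of_forall fun z => ?_) hdom
      (Filter.Eventually.of_forall fun z => ?_)
    · exact mul_nonneg (mul_nonneg hc0.le (Real.exp_nonneg _)) (hu z)
    · have hz : u z ≤ C * ‖x₀ - z‖^2 := by
        have := hCq z
        rwa [norm_sub_rev z x₀] at this
      calc c * Real.exp (-‖x₀ - z‖^2 / (4*t)) * u z
          ≤ c * Real.exp (-‖x₀ - z‖^2 / (4*t)) * (C * ‖x₀ - z‖^2) :=
            mul_le_mul_of_nonneg_left hz (by positivity)
        _ = (c*C) * (Real.exp (-‖x₀ - z‖^2/(4*t)) * ‖x₀ - z‖^2) := by ring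
  have htrans : (∫ z : EuclideanSpace ℝ (Fin n),
        (c*C) * (Real.exp (-‖x₀ - z‖^2/(4*t)) * ‖x₀ - z‖^2))
      = (c*C) * ∫ w : EuclideanSpace ℝ (Fin n), Real.exp (-‖w‖^2/(4*t)) * ‖w‖^2 := by
    rw [integral_const_mul,
      integral_sub_left_eq_self
        (fun w : EuclideanSpace ℝ (Fin n) => Real.exp (-‖w‖^2/(4*t)) * ‖w‖^2) volume x₀]
  have hR0 : (0:ℝ) < 2*Real.sqrt t := by
    have := Real.sqrt_pos.mpr ht
    linarith
  have hscale : (∫ w : EuclideanSpace ℝ (Fin n), Real.exp (-‖w‖^2/(4*t)) * ‖w‖^2)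
      = (2*Real.sqrt t)^n * ((4*t) * auxJ n) := by
    have hcs := MeasureTheory.Measure.integral_comp_smul_of_nonneg (μ := volume)
      (fun w : EuclideanSpace ℝ (Fin n) => Real.exp (-‖w‖^2/(4*t)) * ‖w‖^2)
      (2*Real.sqrt t) (hR := hR0.le)
    rw [finrank_euclideanSpace_fin] at hcs
    have hRsq : (2*Real.sqrt t)^2 = 4*t := by
      rw [mul_pow, Real.sq_sqrt ht.le]; ring
    have hfR : ∀ x : EuclideanSpace ℝ (Fin n),
        Real.exp (-‖(2*Real.sqrt t) • x‖^2/(4*t)) * ‖(2*Real.sqrt t) • x‖^2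
        = (4*t) * (Real.exp (-(1*‖x‖^2)) * ‖x‖^2) := by
      intro x
      rw [norm_smul, Real.norm_eq_abs, abs_of_nonneg hR0.le, mul_pow, hRsq]
      rw [show -((4*t)*‖x‖^2)/(4*t) = -(1*‖x‖^2) by field_simp]
      ring
    simp only [hfR] at hcs
    have e1 : (∫ x : EuclideanSpace ℝ (Fin n), 4*t*(Real.exp (-(1*‖x‖^2)) * ‖x‖^2))
        = 4*t*auxJ n := by
      rw [integral_const_mul]; rfl
    rw [e1] at hcs
    have hpn : (0:ℝ) < (2*Real.sqrt t)^n := pow_pos hR0 n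
    rw [smul_eq_mul] at hcs
    rw [hcs, ← mul_assoc, mul_inv_cancel₀ hpn.ne', one_mul]
  refine hmono.trans ?_
  rw [htrans, hscale]
  have h1 : (c*C) * ((2*Real.sqrt t)^n * ((4*t) * auxJ n))
      = (c*(2*Real.sqrt t)^n) * ((4*C*auxJ n) * t) := by ring
  rw [h1]
  exact mul_le_of_le_one_left (by nlinarith [auxJ_nonneg n, mul_nonneg hC (auxJ_nonneg n), ht.le, mul_nonneg (mul_nonneg (by linarith : (0:ℝ) ≤ 4*C) (auxJ_nonneg n)) ht.le]) (aux_coef ht)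

private lemma aux_quad (n : ℕ) (u : SchwartzMap (EuclideanSpace ℝ (Fin n)) ℝ)
    (hu : ∀ x, 0 ≤ u x) (x₀ : EuclideanSpace ℝ (Fin n)) (hx₀ : u x₀ = 0) :
    ∃ C : ℝ, 0 ≤ C ∧ ∀ z, u z ≤ C * ‖z - x₀‖^2 := by
  obtain ⟨B, hB0, hB⟩ := u.decay 0 2
  refine ⟨B, hB0.le, fun z => ?_⟩
  have hsmooth : ContDiff ℝ 2 (⇑u) := by exact_mod_cast u.smooth 2
  have hdiff : Differentiable ℝ (⇑u) := hsmooth.differentiable (by norm_num)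
  have hdiff' : Differentiable ℝ (fderiv ℝ (⇑u)) :=
    (hsmooth.fderiv_right (m := 1) (by norm_num)).differentiable (by norm_num)
  have hder2 : ∀ x, ‖fderiv ℝ (fderiv ℝ (⇑u)) x‖ ≤ B := by
    intro x
    have h0 : ‖iteratedFDeriv ℝ 0 (fderiv ℝ (fderiv ℝ (⇑u))) x‖
        = ‖iteratedFDeriv ℝ 2 (⇑u) x‖ := by
      rw [norm_iteratedFDeriv_fderiv, norm_iteratedFDeriv_fderiv]
    rw [norm_iteratedFDeriv_zero] at h0
    rw [h0]
    simpa using hB x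
  have hfd0 : fderiv ℝ (⇑u) x₀ = 0 := by
    have hmin : IsLocalMin (⇑u) x₀ :=
      Filter.Eventually.of_forall fun y => by rw [hx₀]; exact hu y
    exact hmin.fderiv_eq_zero
  have hlip : ∀ x, ‖fderiv ℝ (⇑u) x‖ ≤ B * ‖x - x₀‖ := by
    intro x
    have h := Convex.norm_image_sub_le_of_norm_fderiv_le (f := fderiv ℝ (⇑u))
      (fun y _ => hdiff'.differentiableAt) (fun y _ => hder2 y) convex_univ
      (Set.mem_univ x₀) (Set.mem_univ x)
    simpa [hfd0] using h
  have key : ‖u z - u x₀‖ ≤ (B * ‖z - x₀‖) * ‖z - x₀‖ := by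
    refine Convex.norm_image_sub_le_of_norm_fderiv_le (f := (⇑u))
      (s := Metric.closedBall x₀ ‖z - x₀‖)
      (fun y _ => hdiff.differentiableAt) (fun y hy => ?_) (convex_closedBall _ _)
      (Metric.mem_closedBall_self (norm_nonneg _)) ?_
    · refine (hlip y).trans ?_
      have hyx : ‖y - x₀‖ ≤ ‖z - x₀‖ := by
        simpa [dist_eq_norm] using hy
      nlinarith [norm_nonneg (y - x₀)]
    · simp [Metric.mem_closedBall, dist_eq_norm]
  rw [hx₀, sub_zero, Real.norm_eq_abs] at key
  calc u z ≤ |u z| := le_abs_self _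
    _ ≤ (B * ‖z - x₀‖) * ‖z - x₀‖ := key
    _ = B * ‖z - x₀‖^2 := by ring

private lemma aux_K_big (n : ℕ) (u : SchwartzMap (EuclideanSpace ℝ (Fin n)) ℝ)
    (hu : ∀ x, 0 ≤ u x) (x₀ : EuclideanSpace ℝ (Fin n)) :
    ∀ t : ℝ, 1 ≤ t →
      (∫ z : EuclideanSpace ℝ (Fin n),
        (4 * Real.pi * t) ^ (-(n:ℝ)/2) * Real.exp (-‖x₀ - z‖^2 / (4*t)) * u z)
      ≤ ∫ z : EuclideanSpace ℝ (Fin n), u z := by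
  intro t htt
  have ht : (0:ℝ) < t := by linarith
  have hc0 : (0:ℝ) < (4 * Real.pi * t) ^ (-(n:ℝ)/2) :=
    Real.rpow_pos_of_pos (by positivity) _
  refine integral_mono_of_nonneg (Filter.Eventually.of_forall fun z =>
      mul_nonneg (mul_nonneg hc0.le (Real.exp_nonneg _)) (hu z))
    (u.integrable) (Filter.Eventually.of_forall fun z => ?_)
  have hc1 : (4 * Real.pi * t) ^ (-(n:ℝ)/2) ≤ 1 :=
    Real.rpow_le_one_of_one_le_of_nonpos
      (by nlinarith [Real.pi_gt_three])
      (by rw [show -(n:ℝ)/2 = -((n:ℝ)/2) by ring]; exact neg_nonpos.mpr (by positivity))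
  have he1 : Real.exp (-‖x₀ - z‖^2 / (4*t)) ≤ 1 := by
    rw [Real.exp_le_one_iff]
    apply div_nonpos_of_nonpos_of_nonneg
    · simp [sq_nonneg ‖x₀ - z‖]
    · linarith
  have hmul : (4 * Real.pi * t) ^ (-(n:ℝ)/2) * Real.exp (-‖x₀ - z‖^2 / (4*t)) ≤ 1 :=
    mul_le_one₀ hc1 (Real.exp_nonneg _) he1
  exact mul_le_of_le_one_left (hu z) hmul

private lemma aux_K_meas (n : ℕ) (u : SchwartzMap (EuclideanSpace ℝ (Fin n)) ℝ)
    (x₀ : EuclideanSpace ℝ (Fin n)) :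
    StronglyMeasurable fun t : ℝ => ∫ z : EuclideanSpace ℝ (Fin n),
      (4 * Real.pi * t) ^ (-(n:ℝ)/2) * Real.exp (-‖x₀ - z‖^2 / (4*t)) * u z := by
  have hu : Measurable (⇑u) := u.continuous.measurable
  have hm : Measurable fun p : ℝ × EuclideanSpace ℝ (Fin n) =>
      (4 * Real.pi * p.1) ^ (-(n:ℝ)/2) * Real.exp (-‖x₀ - p.2‖^2 / (4*p.1)) * u p.2 := by
    fun_prop
  exact hm.stronglyMeasurable.integral_prod_right'

theorem fractional_laplacian_maximum_principle (n : ℕ)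
    (u : SchwartzMap (EuclideanSpace ℝ (Fin n)) ℝ)
    (hu : ∀ x, 0 ≤ u x) (x₀ : EuclideanSpace ℝ (Fin n)) (hx₀ : u x₀ = 0)
    (s : ℝ) (hs : 0 < s) (hs1 : s < 1) :
    ((1 / Real.Gamma (-s)) *
        ∫ t in Set.Ioi (0:ℝ),
          ((∫ z : EuclideanSpace ℝ (Fin n),
              (4 * Real.pi * t) ^ (-(n:ℝ)/2) * Real.exp (-‖x₀ - z‖^2 / (4*t)) * u z)
            - u x₀) * t ^ (-1 - s) ≤ 0) ∧
    (((1 / Real.Gamma (-s)) *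
        ∫ t in Set.Ioi (0:ℝ),
          ((∫ z : EuclideanSpace ℝ (Fin n),
              (4 * Real.pi * t) ^ (-(n:ℝ)/2) * Real.exp (-‖x₀ - z‖^2 / (4*t)) * u z)
            - u x₀) * t ^ (-1 - s) = 0) ↔ ∀ x, u x = 0) := by
  have hΓ : Real.Gamma (-s) < 0 := by
    have h1 : 0 < Real.Gamma (-s + 1) := Real.Gamma_pos_of_pos (by linarith)
    have h2 : Real.Gamma (-s + 1) = -s * Real.Gamma (-s) :=
      Real.Gamma_add_one (by simpa using hs.ne')
    nlinarith
  have hΓ' : 1 / Real.Gamma (-s) < 0 := div_neg_of_pos_of_neg one_pos hΓ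
  simp only [hx₀, sub_zero]
  set K : ℝ → ℝ := fun t => ∫ z : EuclideanSpace ℝ (Fin n),
      (4 * Real.pi * t) ^ (-(n:ℝ)/2) * Real.exp (-‖x₀ - z‖^2 / (4*t)) * u z with hK
  set F : ℝ → ℝ := fun t => K t * t ^ (-1 - s) with hF
  have hKnonneg : ∀ t : ℝ, 0 < t → 0 ≤ K t := fun t ht =>
    integral_nonneg fun z => mul_nonneg
      (mul_nonneg (Real.rpow_nonneg (by positivity) _) (Real.exp_nonneg _)) (hu z)
  have hFnonneg : ∀ t : ℝ, 0 < t → 0 ≤ F t := fun t ht =>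
    mul_nonneg (hKnonneg t ht) (Real.rpow_nonneg ht.le _)
  have hI0 : 0 ≤ ∫ t in Set.Ioi (0:ℝ), F t :=
    setIntegral_nonneg measurableSet_Ioi fun t ht => hFnonneg t ht
  refine ⟨mul_nonpos_iff.mpr (Or.inr ⟨hΓ'.le, hI0⟩), ?_, ?_⟩
  · -- the hard direction
    intro hEq
    -- integrability of F on Ioi 0
    obtain ⟨C, hC0, hCq⟩ := aux_quad n u hu x₀ hx₀
    have hmeasF : AEStronglyMeasurable F (volume.restrict (Set.Ioi (0:ℝ))) := by
      refine (((aux_K_meas n u x₀).mul ?_).aestronglyMeasurable).restrict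
      exact (Measurable.stronglyMeasurable (by fun_prop : Measurable fun t : ℝ => t ^ (-1 - s)))
    have h1 : IntegrableOn F (Set.Ioc (0:ℝ) 1) := by
      have hb : IntegrableOn (fun t : ℝ => (4*C*auxJ n) * t ^ (-s)) (Set.Ioc (0:ℝ) 1) := by
        have hiv := intervalIntegral.intervalIntegrable_rpow' (a := 0) (b := 1) (r := -s)
          (by linarith)
        rw [intervalIntegrable_iff, Set.uIoc_of_le (by norm_num : (0:ℝ) ≤ 1)] at hiv
        exact hiv.const_mul _
      refine Integrable.mono' hb (hmeasF.mono_set Set.Ioc_subset_Ioi_self)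
        (((ae_restrict_iff' measurableSet_Ioc).mpr (Filter.Eventually.of_forall
          fun t ht => ?_)))
      have ht0 : 0 < t := ht.1
      rw [Real.norm_eq_abs, abs_of_nonneg (hFnonneg t ht0)]
      have hKt := aux_K_small n u hu x₀ hC0 hCq t ht0
      have hpow : t * t ^ (-1 - s) = t ^ (-s) := by
        calc t * t ^ (-1 - s) = t ^ (1:ℝ) * t ^ (-1 - s) := by rw [Real.rpow_one]
          _ = t ^ (1 + (-1 - s)) := (Real.rpow_add ht0 _ _).symm
          _ = t ^ (-s) := by congr 1; ring
      calc F t = K t * t ^ (-1 - s) := rfl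
        _ ≤ ((4*C*auxJ n) * t) * t ^ (-1 - s) :=
            mul_le_mul_of_nonneg_right hKt (Real.rpow_nonneg ht0.le _)
        _ = (4*C*auxJ n) * (t * t ^ (-1 - s)) := by ring
        _ = (4*C*auxJ n) * t ^ (-s) := by rw [hpow]
    have h2 : IntegrableOn F (Set.Ioi (1:ℝ)) := by
      have hb : IntegrableOn (fun t : ℝ => (∫ z : EuclideanSpace ℝ (Fin n), u z) * t ^ (-1-s))
          (Set.Ioi (1:ℝ)) :=
        (integrableOn_Ioi_rpow_of_lt (by linarith) one_pos).const_mul _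
      refine Integrable.mono' hb (hmeasF.mono_set (Set.Ioi_subset_Ioi zero_le_one))
        (((ae_restrict_iff' measurableSet_Ioi).mpr (Filter.Eventually.of_forall
          fun t ht => ?_)))
      have ht1 : (1:ℝ) ≤ t := le_of_lt ht
      have ht0 : (0:ℝ) < t := lt_of_lt_of_le one_pos ht1
      rw [Real.norm_eq_abs, abs_of_nonneg (hFnonneg t ht0)]
      exact mul_le_mul_of_nonneg_right (aux_K_big n u hu x₀ t ht1)
        (Real.rpow_nonneg ht0.le _)
    have hInt : IntegrableOn F (Set.Ioi (0:ℝ)) := by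
      rw [← Set.Ioc_union_Ioi_eq_Ioi (zero_le_one : (0:ℝ) ≤ 1)]
      exact h1.union h2
    -- integral equals zero
    have hI : ∫ t in Set.Ioi (0:ℝ), F t = 0 := by
      rcases mul_eq_zero.mp hEq with h | h
      · exact absurd h hΓ'.ne
      · exact h
    have hFae : F =ᵐ[volume.restrict (Set.Ioi (0:ℝ))] 0 :=
      (integral_eq_zero_iff_of_nonneg_ae
        ((ae_restrict_iff' measurableSet_Ioi).mpr
          (Filter.Eventually.of_forall fun t ht => hFnonneg t ht)) hInt).mp hI
    haveI : (ae (volume.restrict (Set.Ioi (0:ℝ)))).NeBot := by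
      rw [ae_neBot]
      intro h
      rw [Measure.restrict_eq_zero, Real.volume_Ioi] at h
      simp at h
    obtain ⟨t, htF, ht⟩ := (hFae.and (ae_restrict_mem measurableSet_Ioi)).exists
    have ht0 : (0:ℝ) < t := ht
    have hKt : K t = 0 := by
      have hrp : 0 < t ^ (-1 - s) := Real.rpow_pos_of_pos ht0 _
      rcases mul_eq_zero.mp (by simpa using htF) with h | h
      · exact h
      · exact absurd h hrp.ne'
    -- now the inner integral is zero
    have hc0 : (0:ℝ) < (4 * Real.pi * t) ^ (-(n:ℝ)/2) :=
      Real.rpow_pos_of_pos (by positivity) _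
    set g : EuclideanSpace ℝ (Fin n) → ℝ := fun z =>
      (4 * Real.pi * t) ^ (-(n:ℝ)/2) * Real.exp (-‖x₀ - z‖^2 / (4*t)) * u z with hg
    have hg_cont : Continuous g := by
      apply Continuous.mul _ u.continuous
      exact continuous_const.mul
        ((((continuous_const.sub continuous_id).norm.pow 2).neg.div_const _).rexp)
    have hg_int : Integrable g := by
      refine ((u.integrable (μ := volume)).const_mul
        ((4 * Real.pi * t) ^ (-(n:ℝ)/2))).mono' hg_cont.aestronglyMeasurable
        (Filter.Eventually.of_forall fun z => ?_)
      rw [Real.norm_eq_abs, abs_of_nonneg (mul_nonneg (mul_nonneg hc0.le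
        (Real.exp_nonneg _)) (hu z))]
      have he1 : Real.exp (-‖x₀ - z‖^2 / (4*t)) ≤ 1 := by
        rw [Real.exp_le_one_iff]
        apply div_nonpos_of_nonpos_of_nonneg
        · simp [sq_nonneg ‖x₀ - z‖]
        · linarith
      calc (4 * Real.pi * t) ^ (-(n:ℝ)/2) * Real.exp (-‖x₀ - z‖^2 / (4*t)) * u z
          ≤ (4 * Real.pi * t) ^ (-(n:ℝ)/2) * 1 * u z := by
            apply mul_le_mul_of_nonneg_right _ (hu z)
            exact mul_le_mul_of_nonneg_left he1 hc0.le
        _ = (4 * Real.pi * t) ^ (-(n:ℝ)/2) * u z := by ring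
    have hgae : g =ᵐ[volume] 0 :=
      (integral_eq_zero_iff_of_nonneg_ae (Filter.Eventually.of_forall fun z =>
        mul_nonneg (mul_nonneg hc0.le (Real.exp_nonneg _)) (hu z)) hg_int).mp hKt
    have hgeq : g = fun _ => 0 :=
      (Continuous.ae_eq_iff_eq volume hg_cont continuous_const).mp hgae
    intro x
    have hx := congrFun hgeq x
    simp only [hg] at hx
    rcases mul_eq_zero.mp hx with h | h
    · exact absurd h (by positivity)
    · exact h
  · -- easy direction
    intro h0
    have hF0 : F = fun _ => 0 := by
      funext t
      simp only [hF, hK]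
      simp [h0]
    rw [hF0]
    simp
end

section
/- For every z ∈ ℝⁿ with z ≠ 0, ∫₀^1 (e^{-r|z|²} - 1) r^{-1} dr + ∫₁^∞ e^{-r|z|²} r^{-1} dr = -log(|z|²) + ∫₀^∞ e^{-r} log r dr = -2log|z| - γ, where γ is the Euler–Mascheroni constant. -/
open MeasureTheory Real Set Filter
open scoped Topology Interval

namespace LogKernelAux

noncomputable def F1 (u : ℝ) : ℝ := (Real.exp (-u) - 1) / u
noncomputable def F2 (u : ℝ) : ℝ := Real.exp (-u) / u
noncomputable def G (u : ℝ) : ℝ := Real.exp (-u) * Real.log u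

lemma contOnF1 : ContinuousOn F1 {u : ℝ | u ≠ 0} := by
  unfold F1
  exact ContinuousOn.div (by fun_prop) continuousOn_id fun x hx => hx

lemma contOnF2 : ContinuousOn F2 {u : ℝ | u ≠ 0} := by
  unfold F2
  exact ContinuousOn.div (by fun_prop) continuousOn_id fun x hx => hx

lemma intF1_Ioo : IntegrableOn F1 (Ioo (0:ℝ) 1) := by
  apply Measure.integrableOn_of_bounded (M := 1) measure_Ioo_lt_top.ne
  · exact Measurable.aestronglyMeasurable (by unfold F1; fun_prop)
  · filter_upwards [ae_restrict_mem measurableSet_Ioo] with u hu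
    have hu0 := hu.1
    have h1 : Real.exp (-u) ≤ 1 := by
      simpa using Real.exp_le_exp.2 (neg_nonpos.2 hu0.le)
    have h2 : 1 - u ≤ Real.exp (-u) := by
      have := Real.add_one_le_exp (-u); linarith
    rw [Real.norm_eq_abs]
    unfold F1
    rw [abs_div, abs_of_pos hu0, div_le_one hu0, abs_of_nonpos (by linarith)]
    linarith

lemma intF1_01 : IntervalIntegrable F1 volume 0 1 :=
  (intervalIntegrable_iff_integrableOn_Ioo_of_le zero_le_one).2 intF1_Ioo

lemma intF1_uIcc {a : ℝ} (ha : 0 < a) : IntervalIntegrable F1 volume 1 a := by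
  apply ContinuousOn.intervalIntegrable
  apply contOnF1.mono
  intro x hx
  have : min 1 a ≤ x := hx.1
  have : (0:ℝ) < x := lt_of_lt_of_le (lt_min one_pos ha) this
  exact ne_of_gt this

lemma intF2_uIcc {a : ℝ} (ha : 0 < a) : IntervalIntegrable F2 volume 1 a := by
  apply ContinuousOn.intervalIntegrable
  apply contOnF2.mono
  intro x hx
  have : min 1 a ≤ x := hx.1
  have : (0:ℝ) < x := lt_of_lt_of_le (lt_min one_pos ha) this
  exact ne_of_gt this

lemma intF2_Ioi {a : ℝ} (ha : 0 < a) : IntegrableOn F2 (Ioi a) := by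
  have hg : IntegrableOn (fun x : ℝ => a⁻¹ * Real.exp (-1 * x)) (Ioi a) :=
    (exp_neg_integrableOn_Ioi a one_pos).const_mul a⁻¹
  apply hg.mono' ((contOnF2.mono fun x hx => ne_of_gt (lt_trans ha hx)).aestronglyMeasurable
    measurableSet_Ioi)
  filter_upwards [ae_restrict_mem measurableSet_Ioi] with u hu
  have hu0 : 0 < u := lt_trans ha hu
  rw [Real.norm_eq_abs]
  unfold F2
  rw [abs_div, abs_of_pos hu0, abs_of_pos (Real.exp_pos _), neg_one_mul,
    ← div_eq_inv_mul (Real.exp (-u)) a]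
  gcongr
  exact le_of_lt hu

lemma intG_Ioo : IntegrableOn G (Ioo (0:ℝ) 1) := by
  have hg : IntegrableOn (fun u : ℝ => 2 * u ^ (-(1/2) : ℝ)) (Ioo (0:ℝ) 1) := by
    have := (intervalIntegral.intervalIntegrable_rpow' (a := 0) (b := 1)
      (r := -(1/2)) (by norm_num))
    exact ((intervalIntegrable_iff_integrableOn_Ioo_of_le zero_le_one).1 this).const_mul 2
  apply hg.mono' ?_ ?_
  · apply ContinuousOn.aestronglyMeasurable ?_ measurableSet_Ioo
    unfold G
    exact ContinuousOn.mul (by fun_prop) (Real.continuousOn_log.mono fun x hx => ne_of_gt hx.1)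
  · filter_upwards [ae_restrict_mem measurableSet_Ioo] with u hu
    have hu0 := hu.1
    have hlog : Real.log u < 0 := Real.log_neg hu0 hu.2
    have hexp : Real.exp (-u) ≤ 1 := by
      simpa using Real.exp_le_exp.2 (neg_nonpos.2 hu0.le)
    rw [Real.norm_eq_abs]
    unfold G
    rw [abs_mul, abs_of_pos (Real.exp_pos _), abs_of_neg hlog]
    have h1 : -Real.log u = 2 * Real.log (u ^ (-(1/2) : ℝ)) := by
      rw [Real.log_rpow hu0]; ring
    have h2 : Real.log (u ^ (-(1/2) : ℝ)) ≤ u ^ (-(1/2) : ℝ) := by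
      have := Real.log_le_sub_one_of_pos (Real.rpow_pos_of_pos hu0 (-(1/2)))
      linarith
    have h3 : -Real.log u ≤ 2 * u ^ (-(1/2) : ℝ) := by rw [h1]; linarith
    calc Real.exp (-u) * -Real.log u ≤ 1 * -Real.log u := by
          apply mul_le_mul_of_nonneg_right hexp (by linarith)
      _ = -Real.log u := one_mul _
      _ ≤ 2 * u ^ (-(1/2) : ℝ) := h3

lemma intG_Ioi1 : IntegrableOn G (Ioi (1:ℝ)) := by
  have hg : IntegrableOn (fun x : ℝ => Real.exp (-x) * x ^ ((2:ℝ) - 1)) (Ioi (1:ℝ)) :=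
    (Real.GammaIntegral_convergent (by norm_num : (0:ℝ) < 2)).mono_set
      (Ioi_subset_Ioi zero_le_one)
  apply hg.mono' ?_ ?_
  · apply ContinuousOn.aestronglyMeasurable ?_ measurableSet_Ioi
    unfold G
    exact ContinuousOn.mul (by fun_prop)
      (Real.continuousOn_log.mono fun x hx => ne_of_gt (lt_trans one_pos hx))
  · filter_upwards [ae_restrict_mem measurableSet_Ioi] with u hu
    have hu1 : (1:ℝ) < u := hu
    have hu0 : (0:ℝ) < u := lt_trans one_pos hu1
    have hlog : 0 ≤ Real.log u := Real.log_nonneg hu1.le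
    have hlogu : Real.log u ≤ u := by
      have := Real.log_le_sub_one_of_pos hu0; linarith
    rw [Real.norm_eq_abs]
    unfold G
    rw [abs_mul, abs_of_pos (Real.exp_pos _), abs_of_nonneg hlog]
    have : u ^ ((2:ℝ) - 1) = u := by norm_num
    rw [this]
    exact mul_le_mul_of_nonneg_left hlogu (Real.exp_pos _).le

lemma hasDeriv_exp_neg (x : ℝ) : HasDerivAt (fun r : ℝ => Real.exp (-r)) (Real.exp (-x) * -1) x :=
  (Real.hasDerivAt_exp (-x)).comp x (hasDerivAt_neg x)

lemma B1 : ∫ u in Ioo (0:ℝ) 1, G u = ∫ u in Ioo (0:ℝ) 1, F1 u := by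
  have hB : IntegrableOn (fun r : ℝ => (1 - Real.exp (-r)) * r⁻¹) (Ioo (0:ℝ) 1) := by
    have h : IntegrableOn (fun u : ℝ => -F1 u) (Ioo (0:ℝ) 1) := intF1_Ioo.neg
    apply h.congr_fun ?_ measurableSet_Ioo
    intro x hx
    unfold F1
    simp only [div_eq_mul_inv]
    ring
  have key : ∫ r in (0:ℝ)..1,
      (G r + (1 - Real.exp (-r)) * r⁻¹) = 0 - 0 := by
    apply intervalIntegral.integral_eq_sub_of_hasDerivAt_of_tendsto
      (f := fun r => (1 - Real.exp (-r)) * Real.log r) zero_lt_one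
    · intro x hx
      have := ((hasDerivAt_const x (1:ℝ)).sub (hasDeriv_exp_neg x)).mul
        (Real.hasDerivAt_log hx.1.ne')
      convert this using 1
      · rfl
      · rfl
      unfold G
      simp only [Pi.sub_apply]
      ring
    · apply (intervalIntegrable_iff_integrableOn_Ioo_of_le zero_le_one).2
      exact intG_Ioo.add hB
    · -- tendsto at 0+
      have hslope : Tendsto (fun x : ℝ => (Real.exp x - 1) / x) (𝓝[≠] (0:ℝ)) (𝓝 1) := by
        have := hasDerivAt_iff_tendsto_slope.mp (Real.hasDerivAt_exp 0)
        simpa [slope_fun_def, Real.exp_zero, div_eq_inv_mul] using this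
      have hneg : Tendsto (fun r : ℝ => -r) (𝓝[>] (0:ℝ)) (𝓝[≠] (0:ℝ)) := by
        rw [tendsto_nhdsWithin_iff]
        constructor
        · simpa using (continuous_neg.tendsto (0:ℝ)).mono_left nhdsWithin_le_nhds
        · filter_upwards [self_mem_nhdsWithin] with r hr
          exact neg_ne_zero.2 (ne_of_gt hr)
      have h1 : Tendsto (fun r : ℝ => (Real.exp (-r) - 1) / (-r)) (𝓝[>] (0:ℝ)) (𝓝 1) :=
        hslope.comp hneg
      have h2 : Tendsto (fun r : ℝ => Real.log r * r) (𝓝[>] (0:ℝ)) (𝓝 0) := by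
        simpa using tendsto_log_mul_rpow_nhdsGT_zero one_pos
      have h3 := h1.mul h2
      rw [mul_zero] at h3
      refine Tendsto.congr' ?_ h3
      filter_upwards [self_mem_nhdsWithin] with r hr
      have hr0 : r ≠ 0 := ne_of_gt hr
      field_simp [hr0]
      ring
    · -- tendsto at 1-
      have hc : ContinuousAt (fun r : ℝ => (1 - Real.exp (-r)) * Real.log r) 1 :=
        ContinuousAt.mul (by fun_prop) (Real.continuousAt_log one_ne_zero)
      have h4 : Tendsto (fun r : ℝ => (1 - Real.exp (-r)) * Real.log r) (𝓝[<] (1:ℝ))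
          (𝓝 ((1 - Real.exp (-(1:ℝ))) * Real.log 1)) :=
        hc.tendsto.mono_left nhdsWithin_le_nhds
      simpa using h4
  rw [sub_zero, intervalIntegral.integral_of_le zero_le_one,
    MeasureTheory.integral_Ioc_eq_integral_Ioo] at key
  rw [MeasureTheory.integral_add intG_Ioo hB] at key
  have hBeq : ∫ u in Ioo (0:ℝ) 1, (1 - Real.exp (-u)) * u⁻¹ = - ∫ u in Ioo (0:ℝ) 1, F1 u := by
    rw [← MeasureTheory.integral_neg]
    apply setIntegral_congr_fun measurableSet_Ioo
    intro x hx
    unfold F1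
    field_simp
    ring
  rw [hBeq] at key
  linarith

lemma B2 : ∫ u in Ioi (1:ℝ), G u = ∫ u in Ioi (1:ℝ), F2 u := by
  have hint : IntegrableOn (fun u : ℝ => G u - F2 u) (Ioi (1:ℝ)) :=
    intG_Ioi1.sub (intF2_Ioi one_pos)
  have key : ∫ u in Ioi (1:ℝ), (G u - F2 u)
      = 0 - -(Real.exp (-(1:ℝ)) * Real.log 1) := by
    apply integral_Ioi_of_hasDerivAt_of_tendsto'
      (f := fun r => -(Real.exp (-r) * Real.log r)) ?_ hint ?_
    · intro x hx
      have hx0 : (0:ℝ) < x := lt_of_lt_of_le one_pos hx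
      have := ((hasDeriv_exp_neg x).mul (Real.hasDerivAt_log hx0.ne')).neg
      convert this using 1
      · rfl
      unfold G F2
      field_simp
      ring
    · apply squeeze_zero_norm' ?_ (by simpa using tendsto_pow_mul_exp_neg_atTop_nhds_zero 1)
      filter_upwards [eventually_ge_atTop (1:ℝ)] with r hr
      have hr0 : (0:ℝ) < r := lt_of_lt_of_le one_pos hr
      have hlog : 0 ≤ Real.log r := Real.log_nonneg hr
      have hlogr : Real.log r ≤ r := by
        have := Real.log_le_sub_one_of_pos hr0; linarith
      rw [norm_neg, Real.norm_eq_abs, abs_mul, abs_of_pos (Real.exp_pos _),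
        abs_of_nonneg hlog, mul_comm r (Real.exp (-r))]
      exact mul_le_mul_of_nonneg_left hlogr (Real.exp_pos _).le
  rw [Real.log_one, mul_zero, neg_zero, sub_zero] at key
  rw [MeasureTheory.integral_sub intG_Ioi1 (intF2_Ioi one_pos)] at key
  linarith

lemma B3 : ∫ u in Ioi (0:ℝ), G u = (∫ u in Ioo (0:ℝ) 1, G u) + ∫ u in Ioi (1:ℝ), G u := by
  rw [← Ioc_union_Ioi_eq_Ioi (zero_le_one : (0:ℝ) ≤ 1),
    setIntegral_union (Ioc_disjoint_Ioi le_rfl) measurableSet_Ioi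
      ((integrableOn_Ioc_iff_integrableOn_Ioo).2 intG_Ioo) intG_Ioi1,
    MeasureTheory.integral_Ioc_eq_integral_Ioo]

lemma main_identity {a : ℝ} (ha : 0 < a) :
    ((∫ r in Ioo (0:ℝ) 1, (Real.exp (-r * a) - 1) / r) +
        ∫ r in Ioi (1:ℝ), Real.exp (-r * a) / r)
      = -Real.log a + ∫ r in Ioi (0:ℝ), Real.exp (-r) * Real.log r := by
  have S1 : (∫ r in Ioo (0:ℝ) 1, (Real.exp (-r * a) - 1) / r) = ∫ u in (0:ℝ)..a, F1 u := by
    rw [← MeasureTheory.integral_Ioc_eq_integral_Ioo,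
      ← intervalIntegral.integral_of_le zero_le_one]
    have hfun : ∀ r : ℝ, (Real.exp (-r * a) - 1) / r = a * F1 (a * r) := by
      intro r
      unfold F1
      rcases eq_or_ne r 0 with h | h
      · simp [h]
      · field_simp [h]
    calc (∫ r in (0:ℝ)..1, (Real.exp (-r * a) - 1) / r)
        = ∫ r in (0:ℝ)..1, a * F1 (a * r) := by
          apply intervalIntegral.integral_congr
          intro x _; exact hfun x
      _ = a • ∫ r in (0:ℝ)..1, F1 (a * r) := by
          rw [← intervalIntegral.integral_smul]; simp [smul_eq_mul]
      _ = ∫ u in (a * 0)..(a * 1), F1 u := intervalIntegral.smul_integral_comp_mul_left F1 a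
      _ = ∫ u in (0:ℝ)..a, F1 u := by norm_num
  have S2 : (∫ r in Ioi (1:ℝ), Real.exp (-r * a) / r) = ∫ u in Ioi a, F2 u := by
    have hfun : ∀ r : ℝ, Real.exp (-r * a) / r = a * F2 (a * r) := by
      intro r
      unfold F2
      rcases eq_or_ne r 0 with h | h
      · simp [h]
      · field_simp [h]
    simp_rw [hfun]
    rw [MeasureTheory.integral_const_mul, integral_comp_mul_left_Ioi F2 1 ha, mul_one,
      smul_eq_mul, ← mul_assoc, mul_inv_cancel₀ ha.ne', one_mul]
  have P1 : (∫ u in (0:ℝ)..a, F1 u)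
      = (∫ u in Ioo (0:ℝ) 1, F1 u) + ∫ u in (1:ℝ)..a, F1 u := by
    rw [← intervalIntegral.integral_add_adjacent_intervals intF1_01 (intF1_uIcc ha),
      intervalIntegral.integral_of_le zero_le_one, MeasureTheory.integral_Ioc_eq_integral_Ioo]
  have P2 : (∫ u in Ioi a, F2 u) = (∫ u in Ioi (1:ℝ), F2 u) - ∫ u in (1:ℝ)..a, F2 u := by
    rcases le_total (1:ℝ) a with h | h
    · rw [intervalIntegral.integral_of_le h, ← Ioc_union_Ioi_eq_Ioi h,
        setIntegral_union (Ioc_disjoint_Ioi le_rfl) measurableSet_Ioi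
          ((intF2_Ioi one_pos).mono_set Ioc_subset_Ioi_self) (intF2_Ioi ha)]
      ring
    · rw [intervalIntegral.integral_of_ge h, ← Ioc_union_Ioi_eq_Ioi h,
        setIntegral_union (Ioc_disjoint_Ioi le_rfl) measurableSet_Ioi
          ((intF2_Ioi ha).mono_set Ioc_subset_Ioi_self) (intF2_Ioi one_pos)]
      ring
  have P3 : (∫ u in (1:ℝ)..a, F1 u) - ∫ u in (1:ℝ)..a, F2 u = -Real.log a := by
    rw [← intervalIntegral.integral_sub (intF1_uIcc ha) (intF2_uIcc ha)]
    have h0 : (0:ℝ) ∉ [[1, a]] := notMem_uIcc_of_lt one_pos ha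
    have hcong : ∫ u in (1:ℝ)..a, (F1 u - F2 u) = ∫ u in (1:ℝ)..a, -(1/u) := by
      apply intervalIntegral.integral_congr
      intro x hx
      have hx0 : x ≠ 0 := fun hc => h0 (hc ▸ hx)
      unfold F1 F2
      field_simp
      ring
    rw [hcong, intervalIntegral.integral_neg, integral_one_div h0, div_one]
  have hG : (∫ r in Ioi (0:ℝ), Real.exp (-r) * Real.log r) = ∫ u in Ioi (0:ℝ), G u := rfl
  rw [hG, S1, S2, P1, P2, B3, B1, B2]
  have := P3
  ring_nf
  ring_nf at this ⊢
  linarith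
end LogKernelAux

open MeasureTheory Real

theorem log_kernel_identity (n : ℕ) (z : EuclideanSpace ℝ (Fin n)) (hz : z ≠ 0) :
    ((∫ r in Set.Ioo (0:ℝ) 1, (Real.exp (-r * ‖z‖^2) - 1) / r) +
        ∫ r in Set.Ioi (1:ℝ), Real.exp (-r * ‖z‖^2) / r
      = -Real.log (‖z‖^2) + ∫ r in Set.Ioi (0:ℝ), Real.exp (-r) * Real.log r) ∧
    ((∫ r in Set.Ioo (0:ℝ) 1, (Real.exp (-r * ‖z‖^2) - 1) / r) +
        ∫ r in Set.Ioi (1:ℝ), Real.exp (-r * ‖z‖^2) / r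
      = -2 * Real.log ‖z‖ -
          (-(∫ r in Set.Ioi (0:ℝ), Real.exp (-r) * Real.log r))) := by
  have hz' : (0:ℝ) < ‖z‖ := norm_pos_iff.2 hz
  have ha : (0:ℝ) < ‖z‖ ^ 2 := pow_pos hz' 2
  constructor
  · exact LogKernelAux.main_identity ha
  · rw [LogKernelAux.main_identity ha, Real.log_pow]
    push_cast
    ring
end

section
/- For y > 0 and 0 < s < 1, the function P_y^s(x) = (Γ(n/2+s)/(Γ(s)π^{n/2})) · y^{2s}/(y²+|x|²)^{(n+2s)/2} on ℝⁿ satisfies P_y^s(x) = (y^{2s}/(4^s Γ(s))) ∫₀^∞ e^{-y²/(4t)} G_t(x) t^{-1-s} dt, where G_t(x) = (4πt)^{-n/2} e^{-|x|²/(4t)} is the heat kernel; in particular ∫_{ℝⁿ} P_y^s(x) dx = 1. -/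
open MeasureTheory Real

lemma aux_ptwise {a p : ℝ} {x : ℝ} (hx0 : (0:ℝ) < x) :
    (|(-1:ℝ)| * x ^ ((-1:ℝ) - 1)) • ((x ^ (-1:ℝ)) ^ (p - 1) * Real.exp (-(a * x ^ (-1:ℝ))))
      = Real.exp (-(a / x)) * x ^ (-1 - p) := by
  rw [abs_neg, abs_one, one_mul, smul_eq_mul, Real.rpow_neg_one,
    Real.inv_rpow hx0.le, ← Real.rpow_neg hx0.le,
    show a * x⁻¹ = a / x from (div_eq_mul_inv a x).symm,
    mul_comm (x ^ (-(p-1))) (Real.exp (-(a/x))), ← mul_assoc,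
    mul_comm (x ^ ((-1:ℝ)-1)) (Real.exp (-(a/x))), mul_assoc,
    ← Real.rpow_add hx0]
  norm_num
  congr 1
  ring

lemma aux_integrableOn (a p : ℝ) (ha : 0 < a) (hp : 0 < p) :
    IntegrableOn (fun t : ℝ => Real.exp (-(a/t)) * t ^ (-1-p)) (Set.Ioi 0) := by
  have h_int : IntegrableOn (fun y : ℝ => y ^ (p-1) * Real.exp (-(a*y))) (Set.Ioi 0) := by
    have := integrableOn_rpow_mul_exp_neg_mul_rpow (p := 1) (s := p - 1) (b := a)
      (by linarith) one_pos ha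
    refine this.congr_fun (fun x hx => ?_) measurableSet_Ioi
    dsimp only
    rw [Real.rpow_one, neg_mul]
  have := (integrableOn_Ioi_comp_rpow_iff
    (fun y : ℝ => y ^ (p-1) * Real.exp (-(a*y))) (p := -1) (by norm_num)).mpr h_int
  refine this.congr_fun (fun x hx => ?_) measurableSet_Ioi
  exact aux_ptwise hx

lemma aux_integral (a p : ℝ) (ha : 0 < a) (hp : 0 < p) :
    ∫ t in Set.Ioi (0:ℝ), Real.exp (-(a/t)) * t ^ (-1-p) = Real.Gamma p * a ^ (-p) := by
  have h := integral_comp_rpow_Ioi (fun y : ℝ => y ^ (p-1) * Real.exp (-(a*y))) (p := -1)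
    (by norm_num)
  rw [integral_rpow_mul_exp_neg_mul_Ioi hp ha] at h
  rw [← setIntegral_congr_fun measurableSet_Ioi (fun x hx => aux_ptwise (a := a) (p := p) hx), h,
    one_div, ← Real.rpow_neg_one a, ← Real.rpow_mul ha.le, neg_one_mul, mul_comm]

lemma aux_gauss_integrable {V : Type*} [NormedAddCommGroup V] [InnerProductSpace ℝ V]
    [FiniteDimensional ℝ V] [MeasurableSpace V] [BorelSpace V] {b : ℝ} (hb : 0 < b) :
    Integrable (fun v : V => Real.exp (-b * ‖v‖^2)) := by
  have h := GaussianFourier.integrable_cexp_neg_mul_sq_norm_add (V := V) (b := (b:ℂ))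
    (by simpa using hb) 0 0
  refine h.norm.congr (Filter.Eventually.of_forall fun v => ?_)
  simp [Complex.norm_exp, ← Complex.ofReal_pow]

theorem extension_poisson_kernel (n : ℕ) (y s : ℝ) (hy : 0 < y) (hs : 0 < s) (hs1 : s < 1) :
    (∀ x : EuclideanSpace ℝ (Fin n),
      (Real.Gamma ((n:ℝ)/2 + s) / (Real.Gamma s * Real.pi ^ ((n:ℝ)/2))) *
          (y ^ (2*s) / (y^2 + ‖x‖^2) ^ (((n:ℝ) + 2*s)/2))
        = (y ^ (2*s) / (4 ^ s * Real.Gamma s)) *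
            ∫ t in Set.Ioi (0:ℝ),
              Real.exp (-y^2 / (4*t)) *
                ((4 * Real.pi * t) ^ (-(n:ℝ)/2) * Real.exp (-‖x‖^2 / (4*t))) *
                t ^ (-1 - s)) ∧
    (∫ x : EuclideanSpace ℝ (Fin n),
        (Real.Gamma ((n:ℝ)/2 + s) / (Real.Gamma s * Real.pi ^ ((n:ℝ)/2))) *
          (y ^ (2*s) / (y^2 + ‖x‖^2) ^ (((n:ℝ) + 2*s)/2)) = 1) := by
  have hq : 0 < (n:ℝ)/2 + s := by positivity
  have hGs : Real.Gamma s ≠ 0 := (Real.Gamma_pos_of_pos hs).ne'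
  have h4s : (4:ℝ) ^ s ≠ 0 := (Real.rpow_pos_of_pos (by norm_num) s).ne'
  have h4n : (4:ℝ) ^ ((n:ℝ)/2) ≠ 0 := (Real.rpow_pos_of_pos (by norm_num) _).ne'
  have hpin : Real.pi ^ ((n:ℝ)/2) ≠ 0 := (Real.rpow_pos_of_pos Real.pi_pos _).ne'
  have e2 : (4*Real.pi:ℝ) ^ (-(n:ℝ)/2) = ((4:ℝ)^((n:ℝ)/2))⁻¹ * (Real.pi^((n:ℝ)/2))⁻¹ := by
    rw [show -(n:ℝ)/2 = -((n:ℝ)/2) by ring, Real.rpow_neg (by positivity),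
      Real.mul_rpow (by norm_num) Real.pi_pos.le, mul_inv]
  have h1 : ∀ x : EuclideanSpace ℝ (Fin n),
      (Real.Gamma ((n:ℝ)/2 + s) / (Real.Gamma s * Real.pi ^ ((n:ℝ)/2))) *
          (y ^ (2*s) / (y^2 + ‖x‖^2) ^ (((n:ℝ) + 2*s)/2))
        = (y ^ (2*s) / (4 ^ s * Real.Gamma s)) *
            ∫ t in Set.Ioi (0:ℝ),
              Real.exp (-y^2 / (4*t)) *
                ((4 * Real.pi * t) ^ (-(n:ℝ)/2) * Real.exp (-‖x‖^2 / (4*t))) *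
                t ^ (-1 - s) := by
    intro x
    set A : ℝ := ‖x‖^2 with hA
    have hA0 : 0 ≤ A := by positivity
    have hB : 0 < y^2 + A := by positivity
    have ha : 0 < (y^2 + A)/4 := by positivity
    have hpt : ∀ t ∈ Set.Ioi (0:ℝ),
        Real.exp (-y^2 / (4*t)) *
          ((4 * Real.pi * t) ^ (-(n:ℝ)/2) * Real.exp (-A / (4*t))) * t ^ (-1 - s)
        = (4*Real.pi:ℝ) ^ (-(n:ℝ)/2) *
            (Real.exp (-(((y^2+A)/4)/t)) * t ^ (-1 - ((n:ℝ)/2 + s))) := by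
      intro t ht
      have ht0 : (0:ℝ) < t := ht
      have hexp : Real.exp (-y^2/(4*t)) * Real.exp (-A/(4*t))
          = Real.exp (-(((y^2+A)/4)/t)) := by
        rw [← Real.exp_add]; congr 1; field_simp; ring
      have hpow : t ^ (-(n:ℝ)/2) * t ^ (-1-s) = t ^ (-1 - ((n:ℝ)/2 + s)) := by
        rw [← Real.rpow_add ht0]; congr 1; ring
      calc Real.exp (-y^2 / (4*t)) *
          ((4 * Real.pi * t) ^ (-(n:ℝ)/2) * Real.exp (-A / (4*t))) * t ^ (-1 - s)
          = (4*Real.pi:ℝ) ^ (-(n:ℝ)/2) *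
            ((Real.exp (-y^2/(4*t)) * Real.exp (-A/(4*t))) *
              (t ^ (-(n:ℝ)/2) * t ^ (-1-s))) := by
            rw [Real.mul_rpow (by positivity) ht0.le]; ring
        _ = _ := by rw [hexp, hpow]
    rw [setIntegral_congr_fun measurableSet_Ioi hpt, integral_const_mul,
      aux_integral _ _ ha hq]
    have e1 : (((y^2+A)/4:ℝ)) ^ (-((n:ℝ)/2+s))
        = (4:ℝ)^((n:ℝ)/2) * (4:ℝ)^s * ((y^2+A)^((n:ℝ)/2+s))⁻¹ := by
      rw [Real.rpow_neg ha.le, Real.div_rpow hB.le (by norm_num), inv_div,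
        Real.rpow_add (by norm_num : (0:ℝ) < 4)]
      ring
    have hBq : ((y^2+A):ℝ)^((n:ℝ)/2+s) ≠ 0 := (Real.rpow_pos_of_pos hB _).ne'
    rw [show ((n:ℝ)+2*s)/2 = (n:ℝ)/2+s by ring, e1, e2]
    field_simp
  refine ⟨h1, ?_⟩
  -- Part 2
  set E := EuclideanSpace ℝ (Fin n)
  set f : E → ℝ → ℝ := fun x t =>
    Real.exp (-y^2 / (4*t)) *
      ((4 * Real.pi * t) ^ (-(n:ℝ)/2) * Real.exp (-‖x‖^2 / (4*t))) * t ^ (-1 - s) with hf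
  set g : ℝ → ℝ := fun t => Real.exp (-((y^2/4)/t)) * t ^ (-1-s) with hg
  have hy2 : (0:ℝ) < y^2/4 := by positivity
  have hginteg : IntegrableOn g (Set.Ioi 0) := aux_integrableOn _ _ hy2 hs
  -- inner integral over x
  have hinner : ∀ t ∈ Set.Ioi (0:ℝ), ∫ x : E, f x t = g t := by
    intro t ht
    have ht0 : (0:ℝ) < t := ht
    have hb : (0:ℝ) < 1/(4*t) := by positivity
    have hrw : ∀ x : E, f x t =
        (Real.exp (-y^2/(4*t)) * (4 * Real.pi * t) ^ (-(n:ℝ)/2) * t ^ (-1-s)) *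
          Real.exp (-(1/(4*t)) * ‖x‖^2) := by
      intro x
      simp only [hf]
      rw [show -‖x‖^2/(4*t) = -(1/(4*t)) * ‖x‖^2 by ring]
      ring
    rw [integral_congr_ae (Filter.Eventually.of_forall hrw), integral_const_mul,
      GaussianFourier.integral_rexp_neg_mul_sq_norm hb, finrank_euclideanSpace_fin,
      show Real.pi / (1/(4*t)) = 4*Real.pi*t by field_simp]
    have hX : (0:ℝ) < (4*Real.pi*t) ^ ((n:ℝ)/2) := Real.rpow_pos_of_pos (by positivity) _
    rw [show (-(n:ℝ)/2) = -((n:ℝ)/2) by ring, Real.rpow_neg (by positivity : (0:ℝ) ≤ 4*Real.pi*t),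
      hg, show -y^2/(4*t) = -((y^2/4)/t) by ring]
    field_simp
  -- measurability of uncurried f
  have hmeas : AEStronglyMeasurable (Function.uncurry f)
      ((volume : Measure E).prod ((volume : Measure ℝ).restrict (Set.Ioi 0))) := by
    apply Measurable.aestronglyMeasurable
    simp only [hf, Function.uncurry]
    fun_prop
  have hfnn : ∀ t ∈ Set.Ioi (0:ℝ), ∀ x : E, ‖f x t‖ = f x t := by
    intro t ht x
    have ht0 : (0:ℝ) < t := ht
    refine abs_of_nonneg ?_
    simp only [hf]
    exact mul_nonneg (mul_nonneg (Real.exp_pos _).le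
      (mul_nonneg (Real.rpow_nonneg (by positivity) _) (Real.exp_pos _).le))
      (Real.rpow_nonneg ht0.le _)
  have hprod : Integrable (Function.uncurry f)
      ((volume : Measure E).prod ((volume : Measure ℝ).restrict (Set.Ioi 0))) := by
    refine (integrable_prod_iff' hmeas).mpr ⟨?_, ?_⟩
    · refine (ae_restrict_iff' measurableSet_Ioi).mpr
        (Filter.Eventually.of_forall fun t ht => ?_)
      have ht0 : (0:ℝ) < t := ht
      have hb : (0:ℝ) < 1/(4*t) := by positivity
      have hI := (aux_gauss_integrable (V := E) hb).const_mul
        (Real.exp (-y^2/(4*t)) * (4*Real.pi*t) ^ (-(n:ℝ)/2) * t ^ (-1-s))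
      refine hI.congr (Filter.Eventually.of_forall fun x => ?_)
      simp only [hf, Function.uncurry]
      rw [show -(1/(4*t)) * ‖x‖^2 = -‖x‖^2/(4*t) by ring]
      ring
    · refine hginteg.congr ((ae_restrict_iff' measurableSet_Ioi).mpr
        (Filter.Eventually.of_forall fun t ht => ?_))
      have h := hinner t ht
      calc g t = ∫ x : E, f x t := h.symm
        _ = ∫ x : E, ‖f x t‖ := (integral_congr_ae
            (Filter.Eventually.of_forall fun x => hfnn t ht x)).symm
        _ = ∫ x : E, ‖Function.uncurry f (x, t)‖ := rfl
  calc ∫ x : E, (Real.Gamma ((n:ℝ)/2 + s) / (Real.Gamma s * Real.pi ^ ((n:ℝ)/2))) *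
          (y ^ (2*s) / (y^2 + ‖x‖^2) ^ (((n:ℝ) + 2*s)/2))
      = ∫ x : E, (y ^ (2*s) / (4 ^ s * Real.Gamma s)) * ∫ t in Set.Ioi (0:ℝ), f x t :=
        integral_congr_ae (Filter.Eventually.of_forall fun x => h1 x)
    _ = (y ^ (2*s) / (4 ^ s * Real.Gamma s)) * ∫ x : E, ∫ t in Set.Ioi (0:ℝ), f x t :=
        integral_const_mul _ _
    _ = (y ^ (2*s) / (4 ^ s * Real.Gamma s)) * ∫ t in Set.Ioi (0:ℝ), ∫ x : E, f x t := by
        rw [integral_integral_swap hprod]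
    _ = (y ^ (2*s) / (4 ^ s * Real.Gamma s)) * ∫ t in Set.Ioi (0:ℝ), g t := by
        rw [setIntegral_congr_fun measurableSet_Ioi hinner]
    _ = (y ^ (2*s) / (4 ^ s * Real.Gamma s)) * (Real.Gamma s * (y^2/4) ^ (-s)) := by
        rw [hg, aux_integral _ _ hy2 hs]
    _ = 1 := by
        have hys : ((y:ℝ)^2/4) ^ (-s) = 4^s * (y ^ (2*s))⁻¹ := by
          rw [Real.rpow_neg (by positivity), Real.div_rpow (by positivity) (by norm_num),
            inv_div, ← Real.rpow_natCast y 2, ← Real.rpow_mul hy.le]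
          norm_num [div_eq_mul_inv]
        rw [hys]
        have hy2s : y ^ (2*s) ≠ 0 := (Real.rpow_pos_of_pos hy _).ne'
        field_simp
end
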